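/- Let μ be a finite measure on a measurable space X with total mass γ₀ = μ(X) ∈ (0, ∞), let 0 ≤ a with a·γ₀ < 1, and let g, g₀ : X → ℝ be densities with respect to μ (nonnegative measurable functions integrating to 1). Define the shifted densities g_a := a + (1 − aγ₀)·g and g_{0,a} := a + (1 − aγ₀)·g₀. Then 1 − ∫_X √(g_a(x)·g_{0,a}(x)) dμ(x) ≥ (1 − aγ₀)·(1 − ∫_X √(g(x)·g₀(x)) dμ(x)) − 2·√(aγ₀(1 − aγ₀)). -/

import Mathlib

open MeasureTheory

set_option maxHeartbeats 1000000 in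
/-- Lower bound (3.14) for the affinity of the shifted densities:
`1 - ∫ √(gₐ g₀ₐ) dμ ≥ (1 - aγ₀)(1 - ∫ √(g g₀) dμ) - 2√(aγ₀(1 - aγ₀))`. -/
theorem shifted_affinity_lower_bound {X : Type*} [MeasurableSpace X]
    (μ : Measure X) [IsFiniteMeasure μ]
    (γ₀ : ℝ) (hγ₀ : γ₀ = (μ Set.univ).toReal) (hγpos : 0 < γ₀)
    (a : ℝ) (ha : 0 ≤ a) (haγ : a * γ₀ < 1)
    (g g₀ : X → ℝ) (hgm : Measurable g) (hg₀m : Measurable g₀)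
    (hg0 : ∀ x, 0 ≤ g x) (hg₀0 : ∀ x, 0 ≤ g₀ x)
    (hgi : Integrable g μ) (hg₀i : Integrable g₀ μ)
    (hg1 : ∫ x, g x ∂μ = 1) (hg₀1 : ∫ x, g₀ x ∂μ = 1) :
    (1 - a * γ₀) * (1 - ∫ x, Real.sqrt (g x * g₀ x) ∂μ)
        - 2 * Real.sqrt (a * γ₀ * (1 - a * γ₀))
      ≤ 1 - ∫ x, Real.sqrt ((a + (1 - a * γ₀) * g x) * (a + (1 - a * γ₀) * g₀ x)) ∂μ := by
  -- abbreviations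
  obtain ⟨c, hc_def⟩ : ∃ c : ℝ, c = 1 - a * γ₀ := ⟨_, rfl⟩
  rw [← hc_def]
  have hc : 0 < c := by rw [hc_def]; linarith
  have hc1 : c ≤ 1 := by nlinarith
  -- integrability of √(g g₀)
  have hsm : AEStronglyMeasurable (fun x => Real.sqrt (g x * g₀ x)) μ :=
    ((hgm.mul hg₀m).sqrt).aestronglyMeasurable
  have hptw : ∀ x, Real.sqrt (g x * g₀ x) ≤ (g x + g₀ x) / 2 := by
    intro x
    have h1 : g x * g₀ x ≤ ((g x + g₀ x) / 2) ^ 2 := by nlinarith [sq_nonneg (g x - g₀ x)]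
    calc Real.sqrt (g x * g₀ x) ≤ Real.sqrt (((g x + g₀ x) / 2) ^ 2) := Real.sqrt_le_sqrt h1
      _ = (g x + g₀ x) / 2 := Real.sqrt_sq (by have := hg0 x; have := hg₀0 x; linarith)
  have hsint : Integrable (fun x => Real.sqrt (g x * g₀ x)) μ := by
    refine Integrable.mono' ((hgi.add hg₀i).div_const 2) hsm ?_
    filter_upwards with x
    rw [Real.norm_eq_abs, abs_of_nonneg (Real.sqrt_nonneg _)]
    exact hptw x
  obtain ⟨J, hJ⟩ : ∃ J : ℝ, J = ∫ x, Real.sqrt (g x * g₀ x) ∂μ := ⟨_, rfl⟩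
  rw [← hJ]
  -- handle a = 0 separately
  rcases eq_or_lt_of_le ha with rfl | hapos
  · have hc1' : c = 1 := by rw [hc_def]; ring
    subst hc1'
    simp only [zero_mul, mul_zero, zero_add, Real.sqrt_zero, mul_zero, sub_zero, one_mul,
      mul_zero, Real.sqrt_zero, hJ]
    simp
  -- now 0 < a
  obtain ⟨s, hs_def⟩ : ∃ s : ℝ, s = Real.sqrt (a * γ₀ / (2 * c)) := ⟨_, rfl⟩
  have hspos : 0 < s := hs_def ▸ Real.sqrt_pos.mpr (by positivity)
  have hs2 : s ^ 2 = a * γ₀ / (2 * c) := hs_def ▸ Real.sq_sqrt (by positivity)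
  -- pointwise bound
  have hbound : ∀ x, Real.sqrt ((a + c * g x) * (a + c * g₀ x)) ≤
      (a + a / (2 * s)) + (s * c / 2) * (g x + g₀ x) + c * Real.sqrt (g x * g₀ x) := by
    intro x
    have hgx := hg0 x
    have hg₀x := hg₀0 x
    have hsq : (Real.sqrt (g x * g₀ x)) ^ 2 = g x * g₀ x :=
      Real.sq_sqrt (mul_nonneg hgx hg₀x)
    have hsn : 0 ≤ Real.sqrt (g x * g₀ x) := Real.sqrt_nonneg _
    have hu : a / (2 * s) * (2 * s) = a := div_mul_cancel₀ _ (by positivity)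
    obtain ⟨p, hp_def⟩ : ∃ p : ℝ, p = a / (2 * s) := ⟨_, rfl⟩
    obtain ⟨q, hq_def⟩ : ∃ q : ℝ, q = (s * c / 2) * (g x + g₀ x) := ⟨_, rfl⟩
    obtain ⟨r, hr_def⟩ : ∃ r : ℝ, r = c * Real.sqrt (g x * g₀ x) := ⟨_, rfl⟩
    have hpnn : 0 ≤ p := hp_def ▸ by positivity
    have hqnn : 0 ≤ q := hq_def ▸ by
      have h := add_nonneg hgx hg₀x
      positivity
    have hrnn : 0 ≤ r := hr_def ▸ mul_nonneg hc.le hsn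
    have hpq : p * q = a * c * (g x + g₀ x) / 4 := by
      rw [hp_def, hq_def]; field_simp; ring
    have hB : a * c * (g x + g₀ x) ≤ (p + q) ^ 2 := by
      nlinarith [sq_nonneg (p - q), hpq]
    have hRHS : 0 ≤ a + p + q + r := by positivity
    have hr2 : r ^ 2 = c ^ 2 * (g x * g₀ x) := by rw [hr_def, mul_pow, hsq]
    have key : (a + c * g x) * (a + c * g₀ x) ≤ (a + p + q + r) ^ 2 := by
      nlinarith [hB, hr2, mul_nonneg ha (add_nonneg hpnn hqnn), mul_nonneg ha hrnn,
        mul_nonneg (add_nonneg hpnn hqnn) hrnn]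
    calc Real.sqrt ((a + c * g x) * (a + c * g₀ x))
        ≤ Real.sqrt ((a + p + q + r) ^ 2) := Real.sqrt_le_sqrt key
      _ = a + p + q + r := Real.sqrt_sq hRHS
      _ = (a + a / (2 * s)) + (s * c / 2) * (g x + g₀ x) + c * Real.sqrt (g x * g₀ x) := by
        rw [hp_def, hq_def, hr_def]
  -- integrate the bound
  have hint1 : Integrable (fun x => g x + g₀ x) μ := hgi.add hg₀i
  have hint2 : Integrable (fun x => (s * c / 2) * (g x + g₀ x)) μ := hint1.const_mul _
  have hint3 : Integrable (fun x => (a + a / (2 * s)) + (s * c / 2) * (g x + g₀ x)) μ :=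
    (integrable_const _).add hint2
  have hint4 : Integrable (fun x => c * Real.sqrt (g x * g₀ x)) μ := hsint.const_mul c
  have hFint : Integrable (fun x => (a + a / (2 * s)) + (s * c / 2) * (g x + g₀ x)
      + c * Real.sqrt (g x * g₀ x)) μ := hint3.add hint4
  have hImono : ∫ x, Real.sqrt ((a + c * g x) * (a + c * g₀ x)) ∂μ ≤
      ∫ x, ((a + a / (2 * s)) + (s * c / 2) * (g x + g₀ x) + c * Real.sqrt (g x * g₀ x)) ∂μ := by
    refine integral_mono_of_nonneg ?_ hFint ?_
    · filter_upwards with x; exact Real.sqrt_nonneg _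
    · filter_upwards with x; exact hbound x
  have hIval : ∫ x, ((a + a / (2 * s)) + (s * c / 2) * (g x + g₀ x)
      + c * Real.sqrt (g x * g₀ x)) ∂μ
      = (a + a / (2 * s)) * γ₀ + (s * c / 2) * 2 + c * J := by
    rw [integral_add hint3 hint4, integral_add (integrable_const _) hint2,
      integral_const, measureReal_def, integral_const_mul, integral_const_mul,
      integral_add hgi hg₀i, hg1, hg₀1, hγ₀, smul_eq_mul, hJ]
    ring
  -- bound the middle term: a γ₀ / (2 s) + s c = 2 c s and c s = √(a γ₀ c / 2)
  have hsc : a * γ₀ = 2 * c * s ^ 2 := by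
    rw [hs2]; field_simp
  have hcs : c * s ≤ Real.sqrt (a * γ₀ * c) := by
    have : (c * s) ^ 2 = a * γ₀ * c / 2 := by rw [mul_pow, hs2]; field_simp
    have h2 : c * s = Real.sqrt (a * γ₀ * c / 2) := by
      rw [← this]; exact (Real.sqrt_sq (by positivity)).symm
    rw [h2]
    exact Real.sqrt_le_sqrt (by nlinarith)
  have hmid : (a + a / (2 * s)) * γ₀ + (s * c / 2) * 2
      ≤ a * γ₀ + 2 * Real.sqrt (a * γ₀ * c) := by
    have hdiv : a / (2 * s) * γ₀ = c * s := by
      rw [div_mul_eq_mul_div, eq_comm]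
      rw [eq_div_iff (by positivity : (2 : ℝ) * s ≠ 0)]
      nlinarith [hsc]
    have : (a + a / (2 * s)) * γ₀ + (s * c / 2) * 2 = a * γ₀ + c * s + c * s := by
      rw [add_mul, hdiv]; ring
    rw [this]; linarith
  -- conclude
  have htotal : ∫ x, Real.sqrt ((a + c * g x) * (a + c * g₀ x)) ∂μ
      ≤ a * γ₀ + 2 * Real.sqrt (a * γ₀ * c) + c * J := by
    calc _ ≤ _ := hImono
      _ = (a + a / (2 * s)) * γ₀ + (s * c / 2) * 2 + c * J := hIval
      _ ≤ _ := by linarith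
  have : c * (1 - J) - 2 * Real.sqrt (a * γ₀ * c)
      ≤ 1 - (a * γ₀ + 2 * Real.sqrt (a * γ₀ * c) + c * J) := by
    simp only [hc_def]; ring_nf; linarith
  linarith
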